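/- arXiv:2511.03452 — 6 statements merged into one kernel-verified Lean document; each statement's English description precedes it below -/
import Mathlib

section
/- Under ρ > r > 0, γ > 0, y > 0, the function μ is a strictly increasing bijection from [0, ∞) onto [0, ∞); in particular μ(0) = 0 and μ(T) → ∞ as T → ∞. -/
open Real Set Filter

theorem stmt_4 (r ρ γ y : ℝ) (hr : 0 < r) (hγ : 0 < γ) (hy : 0 < y) (hρr : r < ρ) :
    StrictMonoOn
      (fun T : ℝ =>
        (γ * y / (r * (γ - 1) + ρ)) * Real.exp (((ρ - r) / γ) * T) - y / r +
          Real.exp (-r * T) * (y / r - γ * y / (r * (γ - 1) + ρ)))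
      (Set.Ici 0) ∧
    Set.BijOn
      (fun T : ℝ =>
        (γ * y / (r * (γ - 1) + ρ)) * Real.exp (((ρ - r) / γ) * T) - y / r +
          Real.exp (-r * T) * (y / r - γ * y / (r * (γ - 1) + ρ)))
      (Set.Ici 0) (Set.Ici 0) ∧
    (γ * y / (r * (γ - 1) + ρ)) * Real.exp (((ρ - r) / γ) * 0) - y / r +
        Real.exp (-r * 0) * (y / r - γ * y / (r * (γ - 1) + ρ)) = 0 ∧
    Filter.Tendsto
      (fun T : ℝ =>
        (γ * y / (r * (γ - 1) + ρ)) * Real.exp (((ρ - r) / γ) * T) - y / r +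
          Real.exp (-r * T) * (y / r - γ * y / (r * (γ - 1) + ρ)))
      Filter.atTop Filter.atTop := by
  have hD : 0 < r * (γ - 1) + ρ := by nlinarith
  set D : ℝ := r * (γ - 1) + ρ with hDdef
  set A : ℝ := γ * y / D with hA
  set a : ℝ := (ρ - r) / γ with ha
  have hApos : 0 < A := by positivity
  have ha0 : 0 < a := by
    apply div_pos (by linarith) hγ
  set f : ℝ → ℝ := fun T : ℝ =>
      A * Real.exp (a * T) - y / r + Real.exp (-r * T) * (y / r - A) with hf
  set f' : ℝ → ℝ := fun T : ℝ =>
      (y * (ρ - r) / D) * (Real.exp (a * T) - Real.exp (-r * T)) with hf'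
  have hAa : A * a = y * (ρ - r) / D := by
    field_simp [hA, ha]
    rw [hA, ha]; field_simp
  have hyrA : (y / r - A) * r = y * (ρ - r) / D := by
    field_simp [hA]
    rw [hA]; field_simp; rw [hDdef]; ring
  have hderiv : ∀ T : ℝ, HasDerivAt f (f' T) T := by
    intro T
    have h1 : HasDerivAt (fun T : ℝ => A * Real.exp (a * T))
        (A * (Real.exp (a * T) * a)) T := by
      simpa using (((hasDerivAt_id T).const_mul a).exp).const_mul A
    have h2 : HasDerivAt (fun T : ℝ => Real.exp (-r * T) * (y / r - A))
        ((Real.exp (-r * T) * (-r)) * (y / r - A)) T := by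
      simpa using (((hasDerivAt_id T).const_mul (-r)).exp).mul_const (y / r - A)
    have h3 := (h1.sub_const (y / r)).add h2
    refine (h3 : HasDerivAt f _ T).congr_deriv (Eq.symm ?_)
    linear_combination Real.exp (-r * T) * hyrA - Real.exp (a * T) * hAa
  have hf'pos : ∀ T : ℝ, 0 < T → 0 < f' T := by
    intro T hT
    have h1 : Real.exp (-r * T) < Real.exp (a * T) := by
      apply Real.exp_lt_exp.2
      nlinarith
    have h2 : 0 < y * (ρ - r) / D := by
      apply div_pos (by nlinarith) hD
    simp only [hf']
    nlinarith
  have hcont : Continuous f := by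
    fun_prop
  have hmono : StrictMonoOn f (Set.Ici 0) := by
    apply strictMonoOn_of_hasDerivWithinAt_pos (convex_Ici 0) hcont.continuousOn
      (f' := f')
    · intro x hx
      exact (hderiv x).hasDerivWithinAt
    · intro x hx
      rw [interior_Ici] at hx
      exact hf'pos x hx
  have hf0 : f 0 = 0 := by
    simp [hf]
  have htend : Filter.Tendsto f Filter.atTop Filter.atTop := by
    have h1 : Filter.Tendsto (fun T : ℝ => A * Real.exp (a * T) - y / r)
        Filter.atTop Filter.atTop := by
      apply Filter.tendsto_atTop_add_const_right
      apply Filter.Tendsto.const_mul_atTop hApos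
      exact Real.tendsto_exp_atTop.comp (Filter.tendsto_id.const_mul_atTop ha0)
    have h2 : Filter.Tendsto (fun T : ℝ => Real.exp (-r * T) * (y / r - A))
        Filter.atTop (nhds (0 * (y / r - A))) := by
      apply Filter.Tendsto.mul_const
      apply Real.tendsto_exp_atBot.comp
      exact Filter.tendsto_id.const_mul_atTop_of_neg (by linarith : -r < 0)
    exact h1.atTop_add h2
  have hbij : Set.BijOn f (Set.Ici 0) (Set.Ici 0) := by
    refine ⟨?_, hmono.injOn, ?_⟩
    · intro x hx
      have : f 0 ≤ f x := by
        rcases eq_or_lt_of_le (show (0:ℝ) ≤ x from hx) with h | h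
        · rw [h]
        · exact le_of_lt (hmono (Set.mem_Ici.mpr (le_refl 0)) hx h)
      rw [hf0] at this
      exact this
    · intro c hc
      obtain ⟨T, hTc, hT0⟩ := ((htend.eventually_ge_atTop c).and
        (Filter.eventually_ge_atTop (0:ℝ))).exists
      have hsub := intermediate_value_Icc hT0 hcont.continuousOn
      have hcmem : c ∈ Set.Icc (f 0) (f T) := by
        rw [hf0]; exact ⟨hc, hTc⟩
      obtain ⟨x, hx, hfx⟩ := hsub hcmem
      exact ⟨x, hx.1, hfx⟩
  exact ⟨hmono, hbij, by simpa [hf] using hf0, htend⟩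
end

section
/- Define h(a) = -(a + γy/ρ)/y - (γ/ρ)·W₋₁(f(a)) where f(a) = -exp(-(ρ/(γy))·(a + γy/ρ)). Then for every a > 0, h(a) > 0 and μ₀(h(a)) = a, where μ₀(T) = (γy/ρ)·e^{(ρ/γ)T} - y·T - γy/ρ. -/
open Real Set

theorem stmt_9 (ρ γ y : ℝ) (hρ : 0 < ρ) (hγ : 0 < γ) (hy : 0 < y)
    (W : ℝ → ℝ)
    (hWid : ∀ x ∈ Set.Ico (-(Real.exp 1)⁻¹) 0, W x * Real.exp (W x) = x)
    (hWle : ∀ x ∈ Set.Ico (-(Real.exp 1)⁻¹) 0, W x ≤ -1) :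
    ∀ a : ℝ, 0 < a →
      let h := -(a + γ * y / ρ) / y - (γ / ρ) * W (-Real.exp (-(ρ / (γ * y)) * (a + γ * y / ρ)))
      0 < h ∧ (γ * y / ρ) * Real.exp ((ρ / γ) * h) - y * h - γ * y / ρ = a := by
  intro a ha h
  have hgy : 0 < γ * y := mul_pos hγ hy
  set c : ℝ := γ * y / ρ with hc
  set t : ℝ := ρ / (γ * y) * (a + c) with ht
  have hc0 : 0 < c := div_pos hgy hρ
  have hct : c * (ρ / (γ * y)) = 1 := by rw [hc]; field_simp
  have ht1 : 1 < t := by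
    have h1 : ρ / (γ * y) * c = 1 := by rw [hc]; field_simp
    calc 1 = ρ / (γ * y) * c := h1.symm
      _ < t := by
        rw [ht]
        exact mul_lt_mul_of_pos_left (by linarith) (div_pos hρ hgy)
  set x : ℝ := -Real.exp (-t) with hxdef
  have hxneg : x < 0 := by rw [hxdef]; simp [Real.exp_pos]
  have hxmem : x ∈ Set.Ico (-(Real.exp 1)⁻¹) 0 := by
    constructor
    · rw [hxdef, ← Real.exp_neg]
      have : Real.exp (-t) ≤ Real.exp (-1) := Real.exp_le_exp.mpr (by linarith)
      linarith
    · exact hxneg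
  have hW := hWid x hxmem
  have hle := hWle x hxmem
  have hWlt : W x < -t := by
    by_contra hcon
    push_neg at hcon
    set u : ℝ := -(W x) with hu
    have hu1 : 1 ≤ u := by rw [hu]; linarith
    have hut : u ≤ t := by rw [hu]; linarith
    have heq : u * Real.exp (-u) = Real.exp (-t) := by
      have h2 : W x * Real.exp (W x) = -Real.exp (-t) := hW
      have hWu : W x = -u := by rw [hu]; ring
      rw [hWu, neg_mul, neg_inj] at h2
      exact h2
    have hueq : u = Real.exp (-t + u) := by
      have hpos : (0:ℝ) < Real.exp (-u) := Real.exp_pos _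
      have h5 : u * (Real.exp (-u) * Real.exp u) = Real.exp (-t) * Real.exp u := by
        rw [← mul_assoc, heq]
      rw [← Real.exp_add, neg_add_cancel, Real.exp_zero, mul_one, ← Real.exp_add] at h5
      exact h5
    have hle1 : u ≤ 1 := by
      rw [hueq]
      calc Real.exp (-t + u) ≤ Real.exp 0 := Real.exp_le_exp.mpr (by linarith)
        _ = 1 := Real.exp_zero
    have hu' : u = 1 := le_antisymm hle1 hu1
    rw [hu'] at hueq
    have h6 : -t + (1:ℝ) = 0 := Real.exp_eq_one_iff (-t + 1) |>.mp hueq.symm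
    linarith
  have hxarg : -Real.exp (-(ρ / (γ * y)) * (a + γ * y / ρ)) = x := by
    rw [hxdef, ht, hc]; ring_nf
  have hh : h = γ / ρ * (-(W x) - t) := by
    show -(a + c) / y - (γ / ρ) * W (-Real.exp (-(ρ / (γ * y)) * (a + c))) = _
    rw [hxarg]
    have hgt : γ / ρ * t = (a + c) / y := by
      rw [ht]; field_simp
    rw [mul_sub, mul_neg, hgt]; ring
  have hpos : 0 < h := by
    rw [hh]
    exact mul_pos (div_pos hγ hρ) (by linarith)
  refine ⟨hpos, ?_⟩
  have hWne : W x ≠ 0 := by intro h0; rw [h0] at hle; linarith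
  have hexpW : Real.exp (-(W x)) = W x / x := by
    rw [Real.exp_neg, eq_div_iff hxneg.ne, inv_mul_eq_div, div_eq_iff (Real.exp_pos _).ne']
    linarith [hW]
  have hrh : ρ / γ * h = -(W x) - t := by
    rw [hh]; field_simp
  have hexph : Real.exp (ρ / γ * h) = -(W x) := by
    rw [hrh, sub_eq_add_neg, Real.exp_add, hexpW, hxdef, Real.exp_neg]
    field_simp
  rw [hexph, hh]
  have hcta : c * t = a + c := by
    rw [ht, ← mul_assoc, hct, one_mul]
  have hygp : y * (γ / ρ) = c := by rw [hc]; ring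
  nlinarith [hcta, hygp]
end

section
/- The partial derivative with respect to y of the consumption function c*(a; y) = -y·W₋₁(f(a; y)), where f(a; y) = -exp(-(ρ/(γy))·(a + γy/ρ)), equals -w·(1 + (ρa/(γy))·1/(1+w)) with w = W₋₁(f(a; y)), and this quantity is strictly positive. -/
open Real Set

theorem stmt_14 (ρ γ a y : ℝ) (hρ : 0 < ρ) (hγ : 0 < γ) (ha : 0 < a) (hy : 0 < y)
    (W : ℝ → ℝ)
    (hW' : ∀ x ∈ Set.Ioo (-(Real.exp 1)⁻¹) 0,
      HasDerivAt W (W x / (x * (1 + W x))) x)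
    (hWlt : ∀ x ∈ Set.Ioo (-(Real.exp 1)⁻¹) 0, W x < -1)
    (hWid : ∀ x ∈ Set.Ioo (-(Real.exp 1)⁻¹) 0, W x * Real.exp (W x) = x) :
    let w := W (-Real.exp (-(ρ / (γ * y)) * (a + γ * y / ρ)))
    HasDerivAt
      (fun y : ℝ => -y * W (-Real.exp (-(ρ / (γ * y)) * (a + γ * y / ρ))))
      (-w * (1 + (ρ * a / (γ * y)) * (1 / (1 + w))))
      y ∧
    0 < -w * (1 + (ρ * a / (γ * y)) * (1 / (1 + w))) := by
  intro w
  have hy0 : y ≠ 0 := ne_of_gt hy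
  have hγ0 : γ ≠ 0 := ne_of_gt hγ
  have hρ0 : ρ ≠ 0 := ne_of_gt hρ
  have hγy : 0 < γ * y := mul_pos hγ hy
  set A : ℝ := ρ * a / (γ * y) with hA
  have hApos : 0 < A := div_pos (mul_pos hρ ha) hγy
  have hueq : -(ρ / (γ * y)) * (a + γ * y / ρ) = -A - 1 := by
    field_simp [hA]
    have hAm : γ * y * A = ρ * a := by rw [hA]; field_simp
    linarith
  set x : ℝ := -Real.exp (-(ρ / (γ * y)) * (a + γ * y / ρ)) with hx
  have hxneg : x < 0 := by rw [hx]; simp [Real.exp_pos]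
  have hxIoo : x ∈ Set.Ioo (-(Real.exp 1)⁻¹) 0 := by
    refine ⟨?_, hxneg⟩
    rw [hx, hueq]
    have h1 : Real.exp (-A - 1) < Real.exp (-1) := Real.exp_lt_exp.2 (by linarith)
    rw [Real.exp_neg] at h1
    linarith
  have hw : w < -1 := hWlt x hxIoo
  have h1w : 1 + w < 0 := by linarith
  have h1w0 : 1 + w ≠ 0 := ne_of_lt h1w
  have hwneg : w < 0 := by linarith
  have hid : w * Real.exp w = x := hWid x hxIoo
  have hwpos : 1 < -w := by linarith
  have hlog : Real.log (-w) + w = -A - 1 := by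
    have h1 : (-w) * Real.exp w = Real.exp (-A - 1) := by
      rw [hx, hueq] at hid; linarith
    have h2 := congrArg Real.log h1
    rw [Real.log_mul (by linarith) (Real.exp_ne_zero _), Real.log_exp, Real.log_exp] at h2
    exact h2
  have hlogpos : 0 < Real.log (-w) := Real.log_pos hwpos
  have hpos : 0 < -w * (1 + A * (1 / (1 + w))) := by
    have key : 1 + A * (1 / (1 + w)) = (-Real.log (-w)) / (1 + w) := by
      have hln : Real.log (-w) = Real.log w := Real.log_neg_eq_log w
      field_simp
      linarith
    rw [key]
    exact mul_pos (by linarith) (div_pos_of_neg_of_neg (by linarith) h1w)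
  refine ⟨?_, hpos⟩
  -- derivative
  have hxne : x ≠ 0 := ne_of_lt hxneg
  have hgy : (γ * y) ^ 2 ≠ 0 := pow_ne_zero _ (ne_of_gt hγy)
  -- aux function equal near y
  have haux : HasDerivAt (fun t : ℝ => -(ρ * a) * (γ * t)⁻¹ - 1)
      (-(ρ * a) * (-γ / (γ * y) ^ 2)) y := by
    have h1 : HasDerivAt (fun t : ℝ => γ * t) γ y := by
      simpa using (hasDerivAt_id y).const_mul γ
    have h2 : HasDerivAt (fun t : ℝ => (γ * t)⁻¹) (-γ / (γ * y) ^ 2) y :=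
      h1.inv (ne_of_gt hγy)
    simpa using (h2.const_mul (-(ρ * a))).sub_const 1
  have heq : (fun t : ℝ => -(ρ / (γ * t)) * (a + γ * t / ρ))
      =ᶠ[nhds y] (fun t : ℝ => -(ρ * a) * (γ * t)⁻¹ - 1) := by
    filter_upwards [eventually_ne_nhds hy0] with t ht
    field_simp
    ring
  have hinner : HasDerivAt (fun t : ℝ => -(ρ / (γ * t)) * (a + γ * t / ρ))
      (-(ρ * a) * (-γ / (γ * y) ^ 2)) y := haux.congr_of_eventuallyEq heq
  have hf : HasDerivAt (fun t : ℝ => -Real.exp (-(ρ / (γ * t)) * (a + γ * t / ρ)))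
      (x * (-(ρ * a) * (-γ / (γ * y) ^ 2))) y := by
    have := (hinner.exp).fun_neg
    refine this.congr_deriv ?_
    rw [hx]; ring
  have hWf : HasDerivAt W (W x / (x * (1 + W x))) x := hW' x hxIoo
  have hcomp : HasDerivAt (fun t : ℝ => W (-Real.exp (-(ρ / (γ * t)) * (a + γ * t / ρ))))
      (W x / (x * (1 + W x)) * (x * (-(ρ * a) * (-γ / (γ * y) ^ 2)))) y := by
    have := hWf.comp y hf
    simpa [hx, Function.comp_def] using this
  have hprod := ((hasDerivAt_id y).fun_neg.fun_mul hcomp)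
  have hfin : HasDerivAt
      (fun t : ℝ => -t * W (-Real.exp (-(ρ / (γ * t)) * (a + γ * t / ρ))))
      (-1 * W x + -y * (W x / (x * (1 + W x)) * (x * (-(ρ * a) * (-γ / (γ * y) ^ 2))))) y := by
    simpa [hx] using hprod
  convert hfin using 1
  have hwdef : w = W x := rfl
  rw [← hwdef]
  rw [hA]
  field_simp
  ring
end

section
/- The second partial derivative of c*(a; y) = -y·W₋₁(f(a; y)) with respect to a equals -(ρ²/(γ²y))·w/(1+w)³ with w = W₋₁(f(a; y)), and this is strictly negative; hence the consumption function is strictly concave in assets. -/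
open Real Set

theorem stmt_15 (ρ γ y : ℝ) (hρ : 0 < ρ) (hγ : 0 < γ) (hy : 0 < y)
    (W : ℝ → ℝ)
    (hW' : ∀ x ∈ Set.Ioo (-(Real.exp 1)⁻¹) 0,
      HasDerivAt W (W x / (x * (1 + W x))) x)
    (hWlt : ∀ x ∈ Set.Ioo (-(Real.exp 1)⁻¹) 0, W x < -1) :
    ∀ a : ℝ, 0 < a →
      let w := W (-Real.exp (-(ρ / (γ * y)) * (a + γ * y / ρ)))
      deriv (deriv (fun a : ℝ => -y * W (-Real.exp (-(ρ / (γ * y)) * (a + γ * y / ρ))))) a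
          = -(ρ ^ 2 / (γ ^ 2 * y)) * (w / (1 + w) ^ 3) ∧
      -(ρ ^ 2 / (γ ^ 2 * y)) * (w / (1 + w) ^ 3) < 0 ∧
      StrictConcaveOn ℝ (Set.Ioi 0)
        (fun a : ℝ => -y * W (-Real.exp (-(ρ / (γ * y)) * (a + γ * y / ρ)))) := by
  set k : ℝ := ρ / (γ * y) with hk
  have hk0 : 0 < k := by positivity
  set g : ℝ → ℝ := fun a => -Real.exp (-k * (a + γ * y / ρ)) with hg
  have hkc : k * (γ * y / ρ) = 1 := by rw [hk]; field_simp
  -- membership of g a in the domain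
  have hmem : ∀ a : ℝ, 0 < a → g a ∈ Set.Ioo (-(Real.exp 1)⁻¹) 0 := by
    intro a ha
    constructor
    · have : -k * (a + γ * y / ρ) < -1 := by nlinarith [hk0, ha, hkc]
      have := Real.exp_lt_exp.mpr this
      rw [Real.exp_neg] at this
      simp only [hg]
      linarith
    · simp only [hg]
      exact neg_lt_zero.mpr (Real.exp_pos _)
  have hgne : ∀ a : ℝ, 0 < a → g a ≠ 0 := fun a ha => (hmem a ha).2.ne
  have hwlt : ∀ a : ℝ, 0 < a → W (g a) < -1 := fun a ha => hWlt _ (hmem a ha)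
  have hwne : ∀ a : ℝ, 0 < a → 1 + W (g a) ≠ 0 := by
    intro a ha
    have := hwlt a ha
    intro h; linarith [show W (g a) = -1 by linarith]
  -- derivative of g
  have hg' : ∀ a : ℝ, HasDerivAt g (-k * g a) a := by
    intro a
    have h1 : HasDerivAt (fun x : ℝ => -k * (x + γ * y / ρ)) (-k) a := by
      simpa using ((hasDerivAt_id a).add_const (γ * y / ρ)).const_mul (-k)
    have h2 := (h1.exp).neg
    refine h2.congr_deriv ?_
    simp [hg]; ring
  -- derivative of a ↦ W (g a)
  have hWg' : ∀ a : ℝ, 0 < a →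
      HasDerivAt (fun x => W (g x)) (-k * (W (g a) / (1 + W (g a)))) a := by
    intro a ha
    have h := (hW' (g a) (hmem a ha)).comp a (hg' a)
    refine h.congr_deriv ?_
    field_simp [hgne a ha, hwne a ha]
  set c : ℝ → ℝ := fun a => -y * W (g a) with hc
  have hyk : -y * -k = ρ / γ := by rw [hk]; field_simp
  -- first derivative of c
  have hc' : ∀ a : ℝ, 0 < a →
      HasDerivAt c (ρ / γ * (W (g a) / (1 + W (g a)))) a := by
    intro a ha
    have h := (hWg' a ha).const_mul (-y)
    refine h.congr_deriv ?_
    field_simp [hwne a ha, hk]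
    rw [hk]; field_simp
  set φ : ℝ → ℝ := fun a => ρ / γ * (W (g a) / (1 + W (g a))) with hφ
  -- second derivative
  have hφ' : ∀ a : ℝ, 0 < a →
      HasDerivAt φ (-(ρ ^ 2 / (γ ^ 2 * y)) * (W (g a) / (1 + W (g a)) ^ 3)) a := by
    intro a ha
    have hnum := hWg' a ha
    have hden : HasDerivAt (fun x => 1 + W (g x)) (-k * (W (g a) / (1 + W (g a)))) a := by
      simpa using (hWg' a ha).const_add 1
    have h := ((hnum.div hden (hwne a ha)).const_mul (ρ / γ))
    have key : -k * (W (g a) / (1 + W (g a))) * (1 + W (g a)) -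
        W (g a) * (-k * (W (g a) / (1 + W (g a)))) = -k * (W (g a) / (1 + W (g a))) := by
      ring
    refine h.congr_deriv ?_
    rw [key, hk]
    field_simp [hwne a ha]
  -- deriv c = φ on a neighborhood of any a > 0
  have hderivc : ∀ a : ℝ, 0 < a → deriv c =ᶠ[nhds a] φ := by
    intro a ha
    filter_upwards [isOpen_Ioi.eventually_mem (show a ∈ Set.Ioi 0 from ha)] with b hb
    exact (hc' b hb).deriv
  have hderiv2 : ∀ a : ℝ, 0 < a →
      deriv (deriv c) a = -(ρ ^ 2 / (γ ^ 2 * y)) * (W (g a) / (1 + W (g a)) ^ 3) := by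
    intro a ha
    rw [(hderivc a ha).deriv_eq]
    exact (hφ' a ha).deriv
  -- sign
  have hsign : ∀ a : ℝ, 0 < a →
      -(ρ ^ 2 / (γ ^ 2 * y)) * (W (g a) / (1 + W (g a)) ^ 3) < 0 := by
    intro a ha
    have hw := hwlt a ha
    have h1 : (1 + W (g a)) ^ 3 < 0 := by
      have : 1 + W (g a) < 0 := by linarith
      exact Odd.pow_neg (by decide) this
    have h2 : W (g a) / (1 + W (g a)) ^ 3 > 0 :=
      div_pos_of_neg_of_neg (by linarith) h1
    have h3 : (0:ℝ) < ρ ^ 2 / (γ ^ 2 * y) := by positivity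
    nlinarith
  -- concavity
  have hconc : StrictConcaveOn ℝ (Set.Ioi 0) c := by
    apply strictConcaveOn_of_deriv2_neg (convex_Ioi 0)
    · exact fun x hx => (hc' x hx).continuousAt.continuousWithinAt
    · intro x hx
      rw [interior_Ioi] at hx
      have := hderiv2 x hx
      simp only [Function.iterate_succ, Function.iterate_zero, Function.comp,
        Function.id_def]
      rw [this]
      exact hsign x hx
  intro a ha
  intro w
  exact ⟨hderiv2 a ha, hsign a ha, hconc⟩
end

section
/- The mixed second partial derivative ∂²c*/∂a∂y of c*(a; y) = -y·W₋₁(f(a; y)) equals (aρ²/(γ²y²))·w/(1+w)³ with w = W₋₁(f(a; y)), and this is strictly positive; hence the consumption function is supermodular in (a, y). -/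
open Real Set

lemma mem_aux {ρ γ a y : ℝ} (hρ : 0 < ρ) (hγ : 0 < γ) (ha : 0 < a) (hy : 0 < y) :
    -Real.exp (-(ρ / (γ * y)) * (a + γ * y / ρ)) ∈ Set.Ioo (-(Real.exp 1)⁻¹) 0 := by
  constructor
  · rw [neg_lt_neg_iff, ← Real.exp_neg]
    apply Real.exp_lt_exp.mpr
    have h1 : (ρ / (γ * y)) * (γ * y / ρ) = 1 := by field_simp
    have h2 : 0 < ρ / (γ * y) * a := by positivity
    nlinarith [mul_add (ρ/(γ*y)) a (γ*y/ρ)]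
  · simpa using Real.exp_pos _

-- inner derivative lemma
lemma inner_deriv {ρ γ a y : ℝ} (hρ : 0 < ρ) (hγ : 0 < γ) (ha : 0 < a) (hy : 0 < y)
    (W : ℝ → ℝ)
    (hW' : ∀ x ∈ Set.Ioo (-(Real.exp 1)⁻¹) 0,
      HasDerivAt W (W x / (x * (1 + W x))) x)
    (hWlt : ∀ x ∈ Set.Ioo (-(Real.exp 1)⁻¹) 0, W x < -1) :
    deriv (fun a : ℝ => -y * W (-Real.exp (-(ρ / (γ * y)) * (a + γ * y / ρ)))) a
      = ρ / γ * (W (-Real.exp (-(ρ / (γ * y)) * (a + γ * y / ρ))) /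
          (1 + W (-Real.exp (-(ρ / (γ * y)) * (a + γ * y / ρ))))) := by
  set u := -Real.exp (-(ρ / (γ * y)) * (a + γ * y / ρ)) with hu
  have humem := mem_aux hρ hγ ha hy
  have hlin : HasDerivAt (fun a : ℝ => -(ρ / (γ * y)) * (a + γ * y / ρ)) (-(ρ / (γ * y))) a := by
    simpa using ((hasDerivAt_id a).add_const (γ * y / ρ)).const_mul (-(ρ / (γ * y)))
  have hE : HasDerivAt (fun a : ℝ => -Real.exp (-(ρ / (γ * y)) * (a + γ * y / ρ)))
      (-(Real.exp (-(ρ / (γ * y)) * (a + γ * y / ρ)) * -(ρ / (γ * y)))) a := hlin.exp.neg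
  have hWc := (hW' u humem).comp a hE
  have hfull := hWc.const_mul (-y)
  have hne : (1 : ℝ) + W u ≠ 0 := by
    have := hWlt u humem; linarith
  have hune : u ≠ 0 := ne_of_lt humem.2
  simp only [Function.comp_def] at hfull
  rw [hfull.deriv]
  have hexp : Real.exp (-(ρ / (γ * y)) * (a + γ * y / ρ)) = -u := by rw [hu]; ring
  rw [hexp]
  have hyne : y ≠ 0 := ne_of_gt hy
  have hγne : γ ≠ 0 := ne_of_gt hγ
  field_simp

theorem stmt_16 (ρ γ a y : ℝ) (hρ : 0 < ρ) (hγ : 0 < γ) (ha : 0 < a) (hy : 0 < y)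
    (W : ℝ → ℝ)
    (hW' : ∀ x ∈ Set.Ioo (-(Real.exp 1)⁻¹) 0,
      HasDerivAt W (W x / (x * (1 + W x))) x)
    (hWlt : ∀ x ∈ Set.Ioo (-(Real.exp 1)⁻¹) 0, W x < -1) :
    let w := W (-Real.exp (-(ρ / (γ * y)) * (a + γ * y / ρ)))
    deriv
        (fun y : ℝ =>
          deriv (fun a : ℝ => -y * W (-Real.exp (-(ρ / (γ * y)) * (a + γ * y / ρ)))) a)
        y
      = (a * ρ ^ 2 / (γ ^ 2 * y ^ 2)) * (w / (1 + w) ^ 3) ∧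
    0 < (a * ρ ^ 2 / (γ ^ 2 * y ^ 2)) * (w / (1 + w) ^ 3) := by
  intro w
  have humem := mem_aux hρ hγ ha hy
  have hwlt : w < -1 := hWlt _ humem
  have hne : (1 : ℝ) + w ≠ 0 := by linarith
  have hune : -Real.exp (-(ρ / (γ * y)) * (a + γ * y / ρ)) ≠ 0 := ne_of_lt humem.2
  have hyne : y ≠ 0 := ne_of_gt hy
  have hγne : γ ≠ 0 := ne_of_gt hγ
  have hρne : ρ ≠ 0 := ne_of_gt hρ
  constructor
  · have hEq : (fun y' : ℝ =>
        deriv (fun a : ℝ => -y' * W (-Real.exp (-(ρ / (γ * y')) * (a + γ * y' / ρ)))) a)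
        =ᶠ[nhds y] (fun y' : ℝ =>
          ρ / γ * (W (-Real.exp (-(ρ / (γ * y')) * (a + γ * y' / ρ))) /
            (1 + W (-Real.exp (-(ρ / (γ * y')) * (a + γ * y' / ρ)))))) := by
      filter_upwards [Ioi_mem_nhds hy] with t ht
      exact inner_deriv hρ hγ ha ht W hW' hWlt
    rw [hEq.deriv_eq]
    -- derivative of F at y
    have hden : HasDerivAt (fun y' : ℝ => γ * y') γ y := by
      simpa using (hasDerivAt_id y).const_mul γ
    have hdenne : γ * y ≠ 0 := by positivity
    have hg1 : HasDerivAt (fun y' : ℝ => -(ρ / (γ * y')))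
        (-((0 * (γ * y) - ρ * γ) / (γ * y) ^ 2)) y :=
      (((hasDerivAt_const y ρ).div hden hdenne)).neg
    have hg2 : HasDerivAt (fun y' : ℝ => a + γ * y' / ρ) (γ / ρ) y := by
      simpa using (((hasDerivAt_id y).const_mul γ).div_const ρ).const_add a
    have hφ := hg1.mul hg2
    have hE2 := hφ.exp.neg
    have hw := (hW' _ humem).comp y hE2
    simp only [Function.comp_def, Pi.mul_apply, Pi.neg_apply, Pi.div_apply] at hw
    have hq := hw.div ((hw.const_add 1)) hne
    have hF := hq.const_mul (ρ / γ)
    rw [show deriv (fun y' : ℝ => ρ / γ * (W (-Real.exp (-(ρ / (γ * y')) * (a + γ * y' / ρ))) / (1 + W (-Real.exp (-(ρ / (γ * y')) * (a + γ * y' / ρ)))))) y = _ from hF.deriv]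
    have hwdef : w = W (-Real.exp (-(ρ / (γ * y)) * (a + γ * y / ρ))) := rfl
    rw [hwdef]
    set E := Real.exp (-(ρ / (γ * y)) * (a + γ * y / ρ)) with hEdef
    set ω := W (-E) with hωdef
    have hEne : E ≠ 0 := by rw [hEdef]; positivity
    have hωne : (1 : ℝ) + ω ≠ 0 := hne
    field_simp
    ring
  · have hnum : w < 0 := by linarith
    have hden3 : (1 + w) ^ 3 < 0 := Odd.pow_neg ⟨1, by norm_num⟩ (by linarith)
    have : 0 < w / (1 + w) ^ 3 := div_pos_of_neg_of_neg hnum hden3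
    have hc : 0 < a * ρ ^ 2 / (γ ^ 2 * y ^ 2) := by positivity
    exact mul_pos hc this
end

section
/- Any consumption path c : [0,∞) → [0,∞) that is feasible (i.e., satisfies ∫₀^t e^{-rτ} c(τ) dτ ≤ a - (y/r)(e^{-rt} - 1) for all t ≥ 0) satisfies the intertemporal budget bound ∫₀^∞ e^{-ρt} c(t) dt ≤ a + y/ρ, assuming ρ > r > 0, a > 0, y ≥ 0. -/
open Real Set MeasureTheory intervalIntegral
open scoped ENNReal

lemma aux_exp_int (b t : ℝ) (hb : 0 < b) : ∫ x in Ioi t, exp (-b*x) = exp (-b*t)/b := by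
  have := integral_Ioi_of_hasDerivAt_of_tendsto (f := fun x => -exp (-b*x)/b)
    (f' := fun x => exp (-b*x)) (a := t) (m := 0) ?_ ?_ ?_ ?_
  · rw [this]; ring
  · exact (Continuous.continuousWithinAt (by fun_prop))
  · intro x hx
    have h1 : HasDerivAt (fun x : ℝ => -b*x) (-b) x := by
      simpa using (hasDerivAt_id x).const_mul (-b)
    have := (h1.exp).neg.div_const b
    convert this using 1
    · rfl
    · rfl
    field_simp
  · exact exp_neg_integrableOn_Ioi t hb
  · have h2 : Filter.Tendsto (fun x : ℝ => -b*x) Filter.atTop Filter.atBot :=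
      Filter.Tendsto.const_mul_atTop_of_neg (by linarith) Filter.tendsto_id
    have h3 := Real.tendsto_exp_atBot.comp h2
    simpa using (h3.neg).div_const b

noncomputable def auxG (b r : ℝ) (c : ℝ → ℝ) (t s : ℝ) : ℝ≥0∞ :=
  if t < s then ENNReal.ofReal (b * Real.exp (-b*s)) * ENNReal.ofReal (Real.exp (-r*t) * c t)
  else 0

lemma auxG_meas (b r : ℝ) (c : ℝ → ℝ) (hc : Measurable c) :
    Measurable (Function.uncurry (auxG b r c)) := by
  have : Function.uncurry (auxG b r c) = fun p : ℝ × ℝ =>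
      if p.1 < p.2 then ENNReal.ofReal (b * Real.exp (-b*p.2)) *
        ENNReal.ofReal (Real.exp (-r*p.1) * c p.1) else 0 := rfl
  rw [this]
  apply Measurable.ite (measurableSet_lt measurable_fst measurable_snd)
  · exact (((measurable_snd.const_mul (-b)).exp.const_mul b).ennreal_ofReal).mul
      (((measurable_fst.const_mul (-r)).exp.mul (hc.comp measurable_fst)).ennreal_ofReal)
  · exact measurable_const

theorem stmt_18 (ρ r a y : ℝ) (hr : 0 < r) (hρr : r < ρ) (ha : 0 < a) (hy : 0 ≤ y)
    (c : ℝ → ℝ) (hmeas : Measurable c) (hnonneg : ∀ t, 0 ≤ t → 0 ≤ c t)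
    (hloc : MeasureTheory.LocallyIntegrableOn c (Set.Ici 0))
    (hfeas : ∀ t : ℝ, 0 ≤ t →
      (∫ τ in (0:ℝ)..t, Real.exp (-r * τ) * c τ) ≤ a - (y / r) * (Real.exp (-r * t) - 1)) :
    (∫ t in Set.Ioi (0:ℝ), Real.exp (-ρ * t) * c t) ≤ a + y / ρ := by
  set b : ℝ := ρ - r with hbdef
  have hb : 0 < b := by simp only [hbdef]; linarith
  have hρ : 0 < ρ := lt_trans hr hρr
  have hK : Measurable fun s : ℝ => ENNReal.ofReal (b * Real.exp (-b*s)) := by fun_prop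
  have hL : Measurable fun t : ℝ => ENNReal.ofReal (Real.exp (-r*t) * c t) := by fun_prop
  -- Step A
  have hA : ∀ t : ℝ, (∫⁻ s, auxG b r c t s) = ENNReal.ofReal (Real.exp (-ρ*t) * c t) := by
    intro t
    have h1 : (∫⁻ s, auxG b r c t s) =
        ∫⁻ s in Ioi t, ENNReal.ofReal (b * Real.exp (-b*s)) *
          ENNReal.ofReal (Real.exp (-r*t) * c t) := by
      rw [← lintegral_indicator measurableSet_Ioi]
      apply lintegral_congr
      intro s
      rw [Set.indicator_apply]
      by_cases h : t < s <;> simp [auxG, h, Set.mem_Ioi]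
    rw [h1, lintegral_mul_const _ hK]
    have h2 : (∫⁻ s in Ioi t, ENNReal.ofReal (b * Real.exp (-b*s))) =
        ENNReal.ofReal (Real.exp (-b*t)) := by
      rw [← ofReal_integral_eq_lintegral_ofReal
        ((exp_neg_integrableOn_Ioi t hb).const_mul b)
        (Filter.Eventually.of_forall fun s => mul_nonneg hb.le (exp_pos _).le)]
      rw [MeasureTheory.integral_const_mul, aux_exp_int b t hb]
      congr 1
      field_simp
    rw [h2, ← ENNReal.ofReal_mul (exp_pos _).le]
    congr 1
    rw [← mul_assoc, ← Real.exp_add]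
    congr 2
    simp only [hbdef]; ring
  -- Step B equality
  have hBeq : ∀ s : ℝ, (∫⁻ t in Ioi 0, auxG b r c t s) =
      ENNReal.ofReal (b * Real.exp (-b*s)) *
        ∫⁻ t in Ioo 0 s, ENNReal.ofReal (Real.exp (-r*t) * c t) := by
    intro s
    have h1 : (∫⁻ t in Ioi 0, auxG b r c t s) =
        ∫⁻ t in Ioo 0 s, ENNReal.ofReal (b * Real.exp (-b*s)) *
          ENNReal.ofReal (Real.exp (-r*t) * c t) := by
      rw [← Set.Ioi_inter_Iio, Set.inter_comm, ← Measure.restrict_restrict measurableSet_Iio,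
        ← lintegral_indicator measurableSet_Iio]
      apply lintegral_congr
      intro t
      rw [Set.indicator_apply]
      by_cases h : t < s <;> simp [auxG, h, Set.mem_Iio]
    rw [h1, lintegral_const_mul _ hL]
  -- Step B bound
  have hBle : ∀ s : ℝ, (∫⁻ t in Ioi 0, auxG b r c t s) ≤
      (Ioi (0:ℝ)).indicator (fun s =>
        ENNReal.ofReal ((b * Real.exp (-b*s)) * (a - y/r * (Real.exp (-r*s) - 1)))) s := by
    intro s
    rw [hBeq s]
    rcases le_or_gt s 0 with hs | hs
    · rw [Set.Ioo_eq_empty (not_lt.mpr hs)]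
      simp
    · rw [Set.indicator_of_mem (Set.mem_Ioi.mpr hs)]
      have hcint : IntegrableOn c (Icc 0 s) := hloc.integrableOn_compact_subset
        (fun x hx => hx.1) isCompact_Icc
      have hexpm : AEStronglyMeasurable (fun t : ℝ => Real.exp (-r*t))
          (volume.restrict (Icc 0 s)) :=
        (by fun_prop : Measurable fun t : ℝ => Real.exp (-r*t)).aestronglyMeasurable
      have hfint : IntegrableOn (fun t => Real.exp (-r*t) * c t) (Icc 0 s) := by
        apply Integrable.bdd_mul (c := 1) hcint hexpm
        filter_upwards [ae_restrict_mem measurableSet_Icc] with x hx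
        rw [Real.norm_eq_abs, abs_exp]
        apply Real.exp_le_one_iff.mpr
        nlinarith [hx.1]
      have hfint' : IntegrableOn (fun t => Real.exp (-r*t) * c t) (Ioo 0 s) :=
        hfint.mono_set Set.Ioo_subset_Icc_self
      have hnn : 0 ≤ᵐ[volume.restrict (Ioo 0 s)] fun t => Real.exp (-r*t) * c t := by
        filter_upwards [ae_restrict_mem measurableSet_Ioo] with x hx
        exact mul_nonneg (exp_pos _).le (hnonneg x hx.1.le)
      have h2 : (∫⁻ t in Ioo 0 s, ENNReal.ofReal (Real.exp (-r*t) * c t)) =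
          ENNReal.ofReal (∫ t in Ioo 0 s, Real.exp (-r*t) * c t) :=
        (ofReal_integral_eq_lintegral_ofReal hfint' hnn).symm
      rw [h2, ENNReal.ofReal_mul (mul_nonneg hb.le (exp_pos _).le)]
      apply mul_le_mul_right (ENNReal.ofReal_le_ofReal ?_)
      have h3 : (∫ t in Ioo 0 s, Real.exp (-r*t) * c t) =
          ∫ τ in (0:ℝ)..s, Real.exp (-r * τ) * c τ := by
        rw [intervalIntegral.integral_of_le hs.le, MeasureTheory.integral_Ioc_eq_integral_Ioo]
      rw [h3]
      exact hfeas s hs.le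
  -- the bound integral evaluates to a + y/ρ
  have hval : (∫⁻ s, (Ioi (0:ℝ)).indicator (fun s =>
      ENNReal.ofReal ((b * Real.exp (-b*s)) * (a - y/r * (Real.exp (-r*s) - 1)))) s) =
      ENNReal.ofReal (a + y/ρ) := by
    rw [lintegral_indicator measurableSet_Ioi]
    have hfun : ∀ s : ℝ, (b * Real.exp (-b*s)) * (a - y/r * (Real.exp (-r*s) - 1)) =
        (a + y/r) * (b * Real.exp (-b*s)) - (y*b/r) * Real.exp (-ρ*s) := by
      intro s
      have hes : Real.exp (-ρ*s) = Real.exp (-b*s) * Real.exp (-r*s) := by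
        rw [← Real.exp_add]; congr 1; simp only [hbdef]; ring
      rw [hes]; field_simp; ring
    have hint1 : IntegrableOn (fun s => (a + y/r) * (b * Real.exp (-b*s))) (Ioi 0) :=
      ((exp_neg_integrableOn_Ioi 0 hb).const_mul b).const_mul (a + y/r)
    have hint2 : IntegrableOn (fun s => (y*b/r) * Real.exp (-ρ*s)) (Ioi 0) :=
      (exp_neg_integrableOn_Ioi 0 hρ).const_mul (y*b/r)
    have hintall : IntegrableOn (fun s => (b * Real.exp (-b*s)) *
        (a - y/r * (Real.exp (-r*s) - 1))) (Ioi 0) := by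
      apply MeasureTheory.IntegrableOn.congr_fun (hint1.sub hint2) ?_ measurableSet_Ioi
      intro s _
      simp only [Pi.sub_apply]
      exact (hfun s).symm
    rw [← ofReal_integral_eq_lintegral_ofReal hintall ?_]
    · congr 1
      have heq : (∫ s in Ioi (0:ℝ), (b * Real.exp (-b*s)) * (a - y/r * (Real.exp (-r*s) - 1))) =
          ∫ s in Ioi (0:ℝ), ((a + y/r) * (b * Real.exp (-b*s)) - (y*b/r) * Real.exp (-ρ*s)) := by
        apply setIntegral_congr_fun measurableSet_Ioi
        intro s _
        exact hfun s
      rw [heq, MeasureTheory.integral_sub hint1 hint2,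
        MeasureTheory.integral_const_mul, MeasureTheory.integral_const_mul,
        MeasureTheory.integral_const_mul, aux_exp_int b 0 hb, aux_exp_int ρ 0 hρ]
      simp only [mul_zero, neg_zero, Real.exp_zero]
      field_simp
      ring
    · filter_upwards [ae_restrict_mem measurableSet_Ioi] with s hs
      have h4 : Real.exp (-r*s) ≤ 1 := Real.exp_le_one_iff.mpr
        (by nlinarith [Set.mem_Ioi.mp hs])
      have h5 : 0 ≤ a - y/r * (Real.exp (-r*s) - 1) := by
        have : 0 ≤ y/r := div_nonneg hy hr.le
        nlinarith
      exact mul_nonneg (mul_nonneg hb.le (exp_pos _).le) h5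
  -- Tonelli
  have key : (∫⁻ t in Ioi 0, ENNReal.ofReal (Real.exp (-ρ*t) * c t)) ≤
      ENNReal.ofReal (a + y/ρ) := by
    calc (∫⁻ t in Ioi 0, ENNReal.ofReal (Real.exp (-ρ*t) * c t))
        = ∫⁻ t in Ioi 0, ∫⁻ s, auxG b r c t s :=
          lintegral_congr fun t => (hA t).symm
      _ = ∫⁻ s, ∫⁻ t in Ioi 0, auxG b r c t s :=
          lintegral_lintegral_swap ((auxG_meas b r c hmeas).aemeasurable)
      _ ≤ ∫⁻ s, (Ioi (0:ℝ)).indicator (fun s =>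
            ENNReal.ofReal ((b * Real.exp (-b*s)) * (a - y/r * (Real.exp (-r*s) - 1)))) s :=
          lintegral_mono hBle
      _ = ENNReal.ofReal (a + y/ρ) := hval
  -- conclude
  have hnn : 0 ≤ᵐ[volume.restrict (Ioi 0)] fun t => Real.exp (-ρ*t) * c t := by
    filter_upwards [ae_restrict_mem measurableSet_Ioi] with x hx
    exact mul_nonneg (exp_pos _).le (hnonneg x (Set.mem_Ioi.mp hx).le)
  have hsm : AEStronglyMeasurable (fun t => Real.exp (-ρ*t) * c t) (volume.restrict (Ioi 0)) :=
    ((measurable_id.const_mul (-ρ)).exp.mul hmeas).aestronglyMeasurable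
  rw [MeasureTheory.integral_eq_lintegral_of_nonneg_ae hnn hsm]
  exact ENNReal.toReal_le_of_le_ofReal (by positivity) key
end
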